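/- arXiv:1607.00377 — 2 statements merged into one kernel-verified Lean document; each statement's English description precedes it below -/
import Mathlib

section
/- Let m > 0, let n ≥ 1, let y₁, …, yₙ ∈ ℝ³ be distinct points, let λ₁, …, λₙ : [0,∞) → ℂ be continuous functions, let F̃ : ℂⁿ → ℂⁿ be globally Lipschitz continuous, and let ζ₀ ∈ ℂⁿ. Then there exists τ > 0 and a unique continuously differentiable function ζ : [0,τ] → ℂⁿ with ζ(0) = ζ₀ such that for all t ∈ [0,τ] and all j ∈ {1,…,n}: (1/4π)ζ_j'(t) = (m/4π)ζ_j(t) + Σ_{k≠j} 𝟙{t ≥ |y_j−y_k|} ζ_k(t−|y_j−y_k|)/(4π|y_j−y_k|) + λ_j(t) − Σ_{k=1}^{n} (m/4π) ∫₀^{max(t−|y_j−y_k|,0)} K_{jk}(t−s) ζ_k(s) ds − F̃_j(ζ(t)), where K_{jk}(w) = J₁(m√(w²−|y_j−y_k|²))/√(w²−|y_j−y_k|²) for w > |y_j−y_k|, extended continuously by the value m/2 at w = |y_j−y_k|. -/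
open Real Filter Set Topology intervalIntegral MeasureTheory

/-- The Bessel function of the first kind of order one,
`J₁(x) = (1/π) ∫₀^π cos(θ − x sin θ) dθ`. -/
noncomputable def besselJ1 (x : ℝ) : ℝ :=
  (1 / π) * ∫ θ in (0:ℝ)..π, Real.cos (θ - x * Real.sin θ)

/-- The kernel `w ↦ J₁(m√(w²−r²))/√(w²−r²)`, extended continuously by the value
`m/2` at `w = r` (and below). -/
noncomputable def besselKernel (m r w : ℝ) : ℝ :=
  if r < w then besselJ1 (m * Real.sqrt (w ^ 2 - r ^ 2)) / Real.sqrt (w ^ 2 - r ^ 2)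
  else m / 2

/-- `ζ` (with derivative `ζ'`) is a continuously differentiable solution on `[0,τ]`
of the delay integro-differential system
`(1/4π)ζ_j'(t) = (m/4π)ζ_j(t) + Σ_{k≠j} 𝟙{t ≥ |y_j−y_k|} ζ_k(t−|y_j−y_k|)/(4π|y_j−y_k|)
  + λ_j(t) − Σ_k (m/4π) ∫₀^{max(t−|y_j−y_k|,0)} K_{jk}(t−s) ζ_k(s) ds − F̃_j(ζ(t))`
with initial value `ζ₀`. -/
def IsDelaySolution {n : ℕ} (m : ℝ) (y : Fin n → EuclideanSpace ℝ (Fin 3))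
    (lam : Fin n → ℝ → ℂ) (F : (Fin n → ℂ) → (Fin n → ℂ)) (ζ₀ : Fin n → ℂ)
    (τ : ℝ) (ζ ζ' : ℝ → Fin n → ℂ) : Prop :=
  (∀ t ∈ Icc (0:ℝ) τ, HasDerivWithinAt ζ (ζ' t) (Icc 0 τ) t) ∧
  ContinuousOn ζ' (Icc 0 τ) ∧
  ζ 0 = ζ₀ ∧
  ∀ t ∈ Icc (0:ℝ) τ, ∀ j : Fin n,
    (1 / (4 * π)) * ζ' t j
      = (m / (4 * π)) * ζ t j
        + (∑ k : Fin n, if k ≠ j then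
            (if dist (y j) (y k) ≤ t then
              ζ (t - dist (y j) (y k)) k / (4 * π * dist (y j) (y k)) else 0)
          else 0)
        + lam j t
        - (∑ k : Fin n, (m / (4 * π)) *
            ∫ s in (0:ℝ)..(max (t - dist (y j) (y k)) 0),
              (besselKernel m (dist (y j) (y k)) (t - s) : ℂ) * ζ s k)
        - F (ζ t) j

lemma abs_cos_sub_cos_le (a b : ℝ) : |Real.cos a - Real.cos b| ≤ |a - b| := by
  rw [Real.cos_sub_cos]
  calc |(-2) * Real.sin ((a+b)/2) * Real.sin ((a-b)/2)|
      = 2 * |Real.sin ((a+b)/2)| * |Real.sin ((a-b)/2)| := by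
        rw [abs_mul, abs_mul]; norm_num
    _ ≤ 2 * 1 * |(a-b)/2| :=
        mul_le_mul (mul_le_mul le_rfl (Real.abs_sin_le_one _) (abs_nonneg _) (by norm_num))
          Real.abs_sin_le_abs (abs_nonneg _) (by positivity)
    _ = |a - b| := by rw [abs_div]; norm_num; ring

lemma besselJ1_lipschitz : LipschitzWith 1 besselJ1 := by
  apply LipschitzWith.of_dist_le_mul
  intro x y
  rw [Real.dist_eq, Real.dist_eq]
  unfold besselJ1
  have hix : IntervalIntegrable (fun θ => Real.cos (θ - x * Real.sin θ)) volume 0 π :=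
    (by fun_prop : Continuous fun θ => Real.cos (θ - x * Real.sin θ)).intervalIntegrable 0 π
  have hiy : IntervalIntegrable (fun θ => Real.cos (θ - y * Real.sin θ)) volume 0 π :=
    (by fun_prop : Continuous fun θ => Real.cos (θ - y * Real.sin θ)).intervalIntegrable 0 π
  rw [← mul_sub, ← intervalIntegral.integral_sub hix hiy]
  have key : ‖∫ θ in (0:ℝ)..π, (Real.cos (θ - x * Real.sin θ) - Real.cos (θ - y * Real.sin θ))‖
      ≤ |x - y| * |π - 0| := by
    apply intervalIntegral.norm_integral_le_of_norm_le_const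
    intro θ _
    have h1 : |Real.cos (θ - x * Real.sin θ) - Real.cos (θ - y * Real.sin θ)|
        ≤ |(θ - x * Real.sin θ) - (θ - y * Real.sin θ)| := _root_.abs_cos_sub_cos_le _ _
    have h2 : |(θ - x * Real.sin θ) - (θ - y * Real.sin θ)| = |x - y| * |Real.sin θ| := by
      have : (θ - x * Real.sin θ) - (θ - y * Real.sin θ) = (y - x) * Real.sin θ := by ring
      rw [this, abs_mul, abs_sub_comm]
    calc ‖Real.cos (θ - x * Real.sin θ) - Real.cos (θ - y * Real.sin θ)‖
        ≤ |x - y| * |Real.sin θ| := by rw [Real.norm_eq_abs]; rw [h2] at h1; exact h1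
      _ ≤ |x - y| * 1 := by gcongr; exact Real.abs_sin_le_one _
      _ = |x - y| := mul_one _
  rw [abs_mul]
  calc |1/π| * |∫ θ in (0:ℝ)..π, (Real.cos (θ - x * Real.sin θ) - Real.cos (θ - y * Real.sin θ))|
      ≤ |1/π| * (|x - y| * |π - 0|) := by gcongr; exact key
    _ = 1 * |x - y| := by
        rw [abs_div, abs_one, sub_zero, abs_of_pos Real.pi_pos]
        field_simp

lemma besselJ1_zero : besselJ1 0 = 0 := by
  unfold besselJ1
  simp [integral_cos]

lemma abs_besselJ1_le (x : ℝ) : |besselJ1 x| ≤ |x| := by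
  have := besselJ1_lipschitz.dist_le_mul x 0
  simpa [Real.dist_eq, besselJ1_zero] using this

lemma hasDerivAt_besselJ1_zero : HasDerivAt besselJ1 (1/2) 0 := by
  have key : HasDerivAt (fun x => ∫ θ in (0:ℝ)..π, Real.cos (θ - x * Real.sin θ))
      (∫ θ in (0:ℝ)..π, Real.sin θ * Real.sin (θ - 0 * Real.sin θ)) 0 := by
    have := intervalIntegral.hasDerivAt_integral_of_dominated_loc_of_deriv_le
      (F := fun (x : ℝ) (θ : ℝ) => Real.cos (θ - x * Real.sin θ))
      (F' := fun (x : ℝ) (θ : ℝ) => Real.sin θ * Real.sin (θ - x * Real.sin θ))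
      (μ := MeasureTheory.volume) (x₀ := (0:ℝ)) (a := (0:ℝ)) (b := π) (bound := fun _ => (1:ℝ)) (s := Metric.ball 0 1) (Metric.ball_mem_nhds 0 one_pos)
      ?_ ?_ ?_ ?_ ?_ ?_
    · exact this.2
    · filter_upwards with x
      exact ((by fun_prop : Continuous fun θ => Real.cos (θ - x * Real.sin θ))).aestronglyMeasurable.restrict
    · exact (by fun_prop : Continuous fun θ => Real.cos (θ - 0 * Real.sin θ)).intervalIntegrable 0 π
    · exact ((by fun_prop : Continuous fun θ => Real.sin θ * Real.sin (θ - 0 * Real.sin θ))).aestronglyMeasurable.restrict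
    · filter_upwards with θ
      intro _ x _
      calc ‖Real.sin θ * Real.sin (θ - x * Real.sin θ)‖ = |Real.sin θ| * |Real.sin (θ - x * Real.sin θ)| := abs_mul _ _
        _ ≤ 1 * 1 := mul_le_mul (Real.abs_sin_le_one _) (Real.abs_sin_le_one _) (abs_nonneg _) zero_le_one
        _ = 1 := one_mul _
    · exact intervalIntegrable_const
    · filter_upwards with θ
      intro _ x _
      have h1 : HasDerivAt (fun x : ℝ => θ - x * Real.sin θ) (-Real.sin θ) x := by
        simpa using ((hasDerivAt_id x).mul_const (Real.sin θ)).const_sub θ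
      have h2 := h1.cos
      exact h2.congr_deriv (by ring)
  have h3 : (∫ θ in (0:ℝ)..π, Real.sin θ * Real.sin (θ - 0 * Real.sin θ)) = π / 2 := by
    have : ∀ θ : ℝ, Real.sin θ * Real.sin (θ - 0 * Real.sin θ) = Real.sin θ ^ 2 := by
      intro θ; simp [sq]
    rw [intervalIntegral.integral_congr (fun θ _ => this θ), integral_sin_sq]
    simp
  rw [h3] at key
  have := key.const_mul (1/π)
  unfold besselJ1
  have e : (1:ℝ)/2 = 1/π*(π/2) := by field_simp
  rw [e]; exact this

lemma abs_besselKernel_le {m : ℝ} (hm : 0 < m) (r w : ℝ) (hr : 0 ≤ r) :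
    |besselKernel m r w| ≤ m := by
  unfold besselKernel
  split
  · rename_i h
    have hw : 0 < w ^ 2 - r ^ 2 := by nlinarith
    have hs : 0 < Real.sqrt (w ^ 2 - r ^ 2) := Real.sqrt_pos.2 hw
    rw [abs_div, abs_of_pos hs, div_le_iff₀ hs]
    calc |besselJ1 (m * Real.sqrt (w ^ 2 - r ^ 2))| ≤ |m * Real.sqrt (w ^ 2 - r ^ 2)| :=
          abs_besselJ1_le _
      _ = m * Real.sqrt (w ^ 2 - r ^ 2) := abs_of_pos (by positivity)
  · rw [abs_of_pos (by positivity)]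
    linarith

lemma continuous_besselKernel_zero {m : ℝ} (hm : 0 < m) : Continuous (besselKernel m 0) := by
  have hval : ∀ w : ℝ, 0 < w → besselKernel m 0 w = besselJ1 (m * w) / w := by
    intro w hw
    unfold besselKernel
    rw [if_pos hw]
    congr 2 <;> rw [show w ^ 2 - 0 ^ 2 = w ^ 2 by ring, Real.sqrt_sq hw.le]
  rw [continuous_iff_continuousAt]
  intro w₀
  rcases lt_trichotomy w₀ 0 with h | h | h
  · apply ContinuousAt.congr (continuousAt_const (y := m / 2))
    filter_upwards [Iio_mem_nhds h] with w hw
    unfold besselKernel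
    rw [if_neg (by simp at hw; linarith)]
  · subst h
    rw [← continuousWithinAt_univ, ← Iic_union_Ioi (a := (0:ℝ)), continuousWithinAt_union]
    have hk0 : besselKernel m 0 0 = m / 2 := by unfold besselKernel; rw [if_neg (lt_irrefl 0)]
    constructor
    · apply ContinuousWithinAt.congr (continuousWithinAt_const (b := m / 2))
      · intro w hw
        unfold besselKernel
        rw [if_neg (by simpa using hw)]
      · exact hk0
    · have hd : HasDerivAt (fun w : ℝ => besselJ1 (m * w)) (m / 2) 0 := by
        have hinner : HasDerivAt (fun w : ℝ => m * w) m 0 := by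
          simpa using (hasDerivAt_id (0:ℝ)).const_mul m
        have houter : HasDerivAt besselJ1 (1/2) (m * 0) := by
          rw [mul_zero]; exact hasDerivAt_besselJ1_zero
        have := HasDerivAt.comp (0:ℝ) houter hinner
        exact this.congr_deriv (by ring)
      rw [hasDerivAt_iff_tendsto_slope] at hd
      have htend : Tendsto (besselKernel m 0) (𝓝[Ioi 0] 0) (𝓝 (m / 2)) := by
        apply Tendsto.congr' _ (hd.mono_left (nhdsWithin_mono 0 (fun w hw => by
          simp only [mem_compl_iff, mem_singleton_iff]
          exact ne_of_gt hw)))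
        filter_upwards [self_mem_nhdsWithin] with w hw
        rw [slope_def_field]
        simp only [mul_zero, besselJ1_zero, sub_zero]
        exact (hval w hw).symm
      unfold ContinuousWithinAt
      rw [hk0]
      exact htend
  · have hev : ∀ᶠ w in 𝓝 w₀, besselKernel m 0 w = besselJ1 (m * w) / w := by
      filter_upwards [Ioi_mem_nhds h] with w hw
      exact hval w hw
    have hc : ContinuousAt (fun w : ℝ => besselJ1 (m * w) / w) w₀ := by
      apply ContinuousAt.div
      · exact (besselJ1_lipschitz.continuous.comp (continuous_const.mul continuous_id)).continuousAt
      · exact continuousAt_id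
      · exact ne_of_gt h
    exact hc.congr (hev.mono fun w hw => hw.symm)

noncomputable def convK (m : ℝ) (g : ℝ → ℂ) (s : ℝ) : ℂ :=
  ∫ u in (0:ℝ)..s, ((besselKernel m 0 u : ℝ) : ℂ) * g (s - u)

lemma continuous_convK {m : ℝ} (hm : 0 < m) {g : ℝ → ℂ} (hg : Continuous g) :
    Continuous (convK m g) := by
  apply intervalIntegral.continuous_parametric_intervalIntegral_of_continuous (μ := volume)
    (f := fun s u => ((besselKernel m 0 u : ℝ) : ℂ) * g (s - u)) ?_ continuous_id
  exact (Complex.continuous_ofReal.comp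
      ((continuous_besselKernel_zero hm).comp continuous_snd)).mul
    (hg.comp (continuous_fst.sub continuous_snd))

lemma norm_convK_sub_le {m : ℝ} (hm : 0 < m) {g h : ℝ → ℂ} (hg : Continuous g)
    (hh : Continuous h) {d : ℝ} (hbd : ∀ u, ‖g u - h u‖ ≤ d) {s : ℝ} (hs : 0 ≤ s) :
    ‖convK m g s - convK m h s‖ ≤ m * d * s := by
  have hig : IntervalIntegrable (fun u => ((besselKernel m 0 u : ℝ) : ℂ) * g (s - u)) volume 0 s :=
    ((Complex.continuous_ofReal.comp (continuous_besselKernel_zero hm)).mul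
      (hg.comp (continuous_const.sub continuous_id))).intervalIntegrable 0 s
  have hih : IntervalIntegrable (fun u => ((besselKernel m 0 u : ℝ) : ℂ) * h (s - u)) volume 0 s :=
    ((Complex.continuous_ofReal.comp (continuous_besselKernel_zero hm)).mul
      (hh.comp (continuous_const.sub continuous_id))).intervalIntegrable 0 s
  unfold convK
  rw [← intervalIntegral.integral_sub hig hih]
  have key : ‖∫ u in (0:ℝ)..s, (((besselKernel m 0 u : ℝ) : ℂ) * g (s - u)
      - ((besselKernel m 0 u : ℝ) : ℂ) * h (s - u))‖ ≤ m * d * |s - 0| := by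
    apply intervalIntegral.norm_integral_le_of_norm_le_const
    intro u _
    rw [← mul_sub, norm_mul]
    have h1 : ‖((besselKernel m 0 u : ℝ) : ℂ)‖ ≤ m := by
      rw [Complex.norm_real, Real.norm_eq_abs]
      exact abs_besselKernel_le hm 0 u le_rfl
    exact mul_le_mul h1 (hbd _) (norm_nonneg _) hm.le
  rwa [sub_zero, abs_of_nonneg hs] at key

noncomputable def Phi {n : ℕ} (m : ℝ) (lam : Fin n → ℝ → ℂ) (F : (Fin n → ℂ) → (Fin n → ℂ))
    (g : ℝ → Fin n → ℂ) (s : ℝ) : Fin n → ℂ := fun j =>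
  (m : ℂ) * g s j + 4 * (π : ℂ) * lam j (max s 0)
    - (m : ℂ) * convK m (fun u => g u j) s - 4 * (π : ℂ) * F (g s) j

lemma continuous_Phi {n : ℕ} {m : ℝ} (hm : 0 < m) {lam : Fin n → ℝ → ℂ}
    (hlam : ∀ j, ContinuousOn (lam j) (Ici 0)) {F : (Fin n → ℂ) → (Fin n → ℂ)} {L : NNReal}
    (hF : LipschitzWith L F) {g : ℝ → Fin n → ℂ} (hg : Continuous g) :
    Continuous (Phi m lam F g) := by
  apply continuous_pi
  intro j
  have hgj : Continuous fun u => g u j := (continuous_apply j).comp hg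
  have hlamj : Continuous fun s : ℝ => lam j (max s 0) :=
    (hlam j).comp_continuous (continuous_id.max continuous_const) (fun x => mem_Ici.2 (le_max_right _ _))
  exact (((continuous_const.mul hgj).add (continuous_const.mul hlamj)).sub
      (continuous_const.mul (continuous_convK hm hgj))).sub
    (continuous_const.mul ((continuous_apply j).comp (hF.continuous.comp hg)))

lemma norm_Phi_sub_le {n : ℕ} {m : ℝ} (hm : 0 < m) {lam : Fin n → ℝ → ℂ}
    {F : (Fin n → ℂ) → (Fin n → ℂ)} {L : NNReal} (hF : LipschitzWith L F)
    {g h : ℝ → Fin n → ℂ} (hg : Continuous g) (hh : Continuous h)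
    {d : ℝ} (hd : 0 ≤ d) (hbd : ∀ u, ‖g u - h u‖ ≤ d) {s τ : ℝ} (hs0 : 0 ≤ s) (hsτ : s ≤ τ) :
    ‖Phi m lam F g s - Phi m lam F h s‖ ≤ (m + m * m * τ + 4 * π * L) * d := by
  have hτ0 : 0 ≤ τ := le_trans hs0 hsτ
  have hRHS0 : 0 ≤ (m + m * m * τ + 4 * π * (L:ℝ)) * d := by positivity
  rw [pi_norm_le_iff_of_nonneg hRHS0]
  intro j
  have hgj : Continuous fun u => g u j := (continuous_apply j).comp hg
  have hhj : Continuous fun u => h u j := (continuous_apply j).comp hh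
  have hbdj : ∀ u, ‖g u j - h u j‖ ≤ d := fun u => by
    have := norm_le_pi_norm (g u - h u) j
    rw [Pi.sub_apply] at this
    exact this.trans (hbd u)
  have hbs : ‖g s j - h s j‖ ≤ d := hbdj s
  have hconv : ‖convK m (fun u => g u j) s - convK m (fun u => h u j) s‖ ≤ m * d * τ := by
    refine le_trans (norm_convK_sub_le hm hgj hhj hbdj hs0) ?_
    have : m * d * s ≤ m * d * τ := by
      apply mul_le_mul_of_nonneg_left hsτ (by positivity)
    exact this
  have hFd : ‖F (g s) j - F (h s) j‖ ≤ (L:ℝ) * d := by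
    have h1 : ‖(F (g s) - F (h s)) j‖ ≤ ‖F (g s) - F (h s)‖ := norm_le_pi_norm _ j
    rw [Pi.sub_apply] at h1
    refine h1.trans ?_
    have h2 := hF.dist_le_mul (g s) (h s)
    rw [dist_eq_norm, dist_eq_norm] at h2
    exact h2.trans (mul_le_mul_of_nonneg_left (hbd s) L.2)
  have hsplit : (Phi m lam F g s - Phi m lam F h s) j =
      (m:ℂ) * (g s j - h s j)
        - (m:ℂ) * (convK m (fun u => g u j) s - convK m (fun u => h u j) s)
        - 4 * (π:ℂ) * (F (g s) j - F (h s) j) := by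
    simp only [Pi.sub_apply]
    unfold Phi
    ring
  rw [hsplit]
  have hnm : ‖(m:ℂ)‖ = m := by rw [Complex.norm_real, Real.norm_eq_abs, abs_of_pos hm]
  have hn4π : ‖4 * (π:ℂ)‖ = 4 * π := by
    rw [norm_mul, Complex.norm_real, Real.norm_eq_abs, abs_of_pos Real.pi_pos]
    norm_num
  calc ‖(m:ℂ) * (g s j - h s j)
        - (m:ℂ) * (convK m (fun u => g u j) s - convK m (fun u => h u j) s)
        - 4 * (π:ℂ) * (F (g s) j - F (h s) j)‖
      ≤ ‖(m:ℂ) * (g s j - h s j)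
        - (m:ℂ) * (convK m (fun u => g u j) s - convK m (fun u => h u j) s)‖
        + ‖4 * (π:ℂ) * (F (g s) j - F (h s) j)‖ := norm_sub_le _ _
    _ ≤ (‖(m:ℂ) * (g s j - h s j)‖
        + ‖(m:ℂ) * (convK m (fun u => g u j) s - convK m (fun u => h u j) s)‖)
        + ‖4 * (π:ℂ) * (F (g s) j - F (h s) j)‖ := by
          exact add_le_add (norm_sub_le _ _) le_rfl
    _ ≤ (m * d + m * (m * d * τ)) + 4 * π * ((L:ℝ) * d) := by
        rw [norm_mul, norm_mul, norm_mul, hnm, hn4π]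
        exact add_le_add (add_le_add (mul_le_mul_of_nonneg_left hbs hm.le)
          (mul_le_mul_of_nonneg_left hconv hm.le))
          (mul_le_mul_of_nonneg_left hFd (by positivity))
    _ = (m + m * m * τ + 4 * π * (L:ℝ)) * d := by ring

lemma convK_eq (m : ℝ) (g : ℝ → ℂ) (t : ℝ) :
    (∫ s in (0:ℝ)..t, ((besselKernel m 0 (t - s) : ℝ) : ℂ) * g s) = convK m g t := by
  unfold convK
  have key := intervalIntegral.integral_comp_sub_left (a := (0:ℝ)) (b := t)
    (fun u => ((besselKernel m 0 u : ℝ) : ℂ) * g (t - u)) t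
  simp only [sub_self, sub_zero] at key
  rw [← key]
  apply intervalIntegral.integral_congr
  intro x _
  simp [sub_sub_cancel]

lemma convK_congr {m : ℝ} {g g' : ℝ → ℂ} {τ : ℝ} (hgg : EqOn g g' (Icc 0 τ))
    {s : ℝ} (hs : s ∈ Icc (0:ℝ) τ) : convK m g s = convK m g' s := by
  unfold convK
  apply intervalIntegral.integral_congr
  intro u hu
  rw [uIcc_of_le hs.1] at hu
  have : s - u ∈ Icc (0:ℝ) τ := ⟨by linarith [hu.2], by linarith [hu.1, hs.2]⟩
  simp only []
  rw [hgg this]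

lemma Phi_congr {n : ℕ} {m : ℝ} {lam : Fin n → ℝ → ℂ} {F : (Fin n → ℂ) → (Fin n → ℂ)}
    {g g' : ℝ → Fin n → ℂ} {τ : ℝ} (hgg : EqOn g g' (Icc 0 τ))
    {s : ℝ} (hs : s ∈ Icc (0:ℝ) τ) : Phi m lam F g s = Phi m lam F g' s := by
  funext j
  have hgs : g s = g' s := hgg hs
  have hj : ∀ u ∈ Icc (0:ℝ) τ, (fun u => g u j) u = (fun u => g' u j) u := fun u hu => by
    simp only []
    rw [hgg hu]
  unfold Phi
  rw [hgs, convK_congr hj hs]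

noncomputable def Tmap {n : ℕ} (m : ℝ) (lam : Fin n → ℝ → ℂ) (F : (Fin n → ℂ) → (Fin n → ℂ))
    (ζ₀ : Fin n → ℂ) {τ : ℝ} (hτ : 0 ≤ τ)
    (hcont : ∀ f : C(Icc (0:ℝ) τ, Fin n → ℂ),
      Continuous fun t : ℝ =>
        ζ₀ + ∫ s in (0:ℝ)..t, Phi m lam F (fun u => f (projIcc 0 τ hτ u)) s)
    (f : C(Icc (0:ℝ) τ, Fin n → ℂ)) : C(Icc (0:ℝ) τ, Fin n → ℂ) :=
  ⟨fun t => ζ₀ + ∫ s in (0:ℝ)..(t:ℝ), Phi m lam F (fun u => f (projIcc 0 τ hτ u)) s,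
    (hcont f).comp continuous_subtype_val⟩


/-- Let `m > 0`, `n ≥ 1`, let `y₁,…,yₙ ∈ ℝ³` be distinct, let
`λ₁,…,λₙ : [0,∞) → ℂ` be continuous, let `F̃ : ℂⁿ → ℂⁿ` be globally Lipschitz
and let `ζ₀ ∈ ℂⁿ`.  Then there is `τ > 0` and a unique continuously differentiable
`ζ : [0,τ] → ℂⁿ` with `ζ(0) = ζ₀` solving, for all `t ∈ [0,τ]` and `j`,
`(1/4π)ζ_j'(t) = (m/4π)ζ_j(t) + Σ_{k≠j} 𝟙{t ≥ |y_j−y_k|} ζ_k(t−|y_j−y_k|)/(4π|y_j−y_k|)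
  + λ_j(t) − Σ_k (m/4π) ∫₀^{max(t−|y_j−y_k|,0)} K_{jk}(t−s) ζ_k(s) ds − F̃_j(ζ(t))`,
where `K_{jk}(w) = J₁(m√(w²−|y_j−y_k|²))/√(w²−|y_j−y_k|²)` is extended continuously
by `m/2` at `w = |y_j−y_k|`. -/
theorem delay_system_local_wellposedness
    (m : ℝ) (hm : 0 < m) (n : ℕ) (hn : 1 ≤ n)
    (y : Fin n → EuclideanSpace ℝ (Fin 3)) (hy : Function.Injective y)
    (lam : Fin n → ℝ → ℂ) (hlam : ∀ j, ContinuousOn (lam j) (Ici 0))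
    (F : (Fin n → ℂ) → (Fin n → ℂ)) (L : NNReal) (hF : LipschitzWith L F)
    (ζ₀ : Fin n → ℂ) :
    ∃ τ > 0,
      (∃ ζ ζ' : ℝ → Fin n → ℂ, IsDelaySolution m y lam F ζ₀ τ ζ ζ') ∧
      (∀ ζ ζ' η η' : ℝ → Fin n → ℂ, IsDelaySolution m y lam F ζ₀ τ ζ ζ' →
        IsDelaySolution m y lam F ζ₀ τ η η' → EqOn ζ η (Icc 0 τ)) := by
  classical
  obtain ⟨δ, hδ0, hδ⟩ : ∃ δ > 0, ∀ j k : Fin n, j ≠ k → δ ≤ dist (y j) (y k) := by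
    have hne : (Finset.univ : Finset (Fin n × Fin n)).Nonempty :=
      ⟨(⟨0, hn⟩, ⟨0, hn⟩), Finset.mem_univ _⟩
    refine ⟨Finset.univ.inf' hne
      (fun p : Fin n × Fin n => if p.1 = p.2 then 1 else dist (y p.1) (y p.2)), ?_, ?_⟩
    · rw [gt_iff_lt, Finset.lt_inf'_iff]
      intro p _
      by_cases hp : p.1 = p.2
      · rw [if_pos hp]; norm_num
      · rw [if_neg hp]
        exact dist_pos.2 fun he => hp (hy he)
    · intro j k hjk
      have h1 := Finset.inf'_le
        (fun p : Fin n × Fin n => if p.1 = p.2 then 1 else dist (y p.1) (y p.2))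
        (Finset.mem_univ (j, k))
      exact h1.trans (le_of_eq (by simp [hjk]))
  set C : ℝ := m + m * m + 4 * π * (L:ℝ) + 1 with hCdef
  have hC0 : 0 ≤ m + m * m + 4 * π * (L:ℝ) := by positivity
  have hC1 : 1 ≤ C := by simp only [hCdef]; linarith
  have hCpos : 0 < C := by linarith
  set τ : ℝ := min (δ / 2) (1 / (2 * C)) with hτdef
  have hτ0 : 0 < τ := lt_min (by linarith) (by positivity)
  have hτδ : τ < δ := lt_of_le_of_lt (min_le_left _ _) (by linarith)
  have hτC : τ ≤ 1 / (2 * C) := min_le_right _ _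
  have hτ1 : τ ≤ 1 := by
    refine hτC.trans ?_
    rw [div_le_one (by linarith)]
    linarith
  have hτhalf : τ * (m + m * m * τ + 4 * π * (L:ℝ)) ≤ 1 / 2 := by
    have h1 : m + m * m * τ + 4 * π * (L:ℝ) ≤ C := by
      simp only [hCdef]
      have : m * m * τ ≤ m * m := by nlinarith
      linarith
    have h2 : τ * (m + m * m * τ + 4 * π * (L:ℝ)) ≤ τ * C :=
      mul_le_mul_of_nonneg_left h1 hτ0.le
    refine h2.trans ?_
    rw [le_div_iff₀ (by norm_num : (0:ℝ) < 2)]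
    calc τ * C * 2 ≤ (1 / (2 * C)) * C * 2 := by
          apply mul_le_mul_of_nonneg_right (mul_le_mul_of_nonneg_right hτC hCpos.le) (by norm_num)
      _ = 1 := by
          field_simp
  -- the Banach space of continuous functions on [0, τ]
  have hτle : (0:ℝ) ≤ τ := hτ0.le
  set fbar : C(Icc (0:ℝ) τ, Fin n → ℂ) → ℝ → Fin n → ℂ :=
    fun f u => f (projIcc 0 τ hτle u) with hfbar
  have hfbarc : ∀ f, Continuous (fbar f) := fun f => f.continuous.comp continuous_projIcc
  have hfbar_eq : ∀ (f : C(Icc (0:ℝ) τ, Fin n → ℂ)), ∀ u (hu : u ∈ Icc (0:ℝ) τ),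
      fbar f u = f ⟨u, hu⟩ := by
    intro f u hu
    rw [hfbar]
    simp only []
    rw [projIcc_of_mem hτle hu]
  have hcont : ∀ f : C(Icc (0:ℝ) τ, Fin n → ℂ),
      Continuous fun t : ℝ =>
        ζ₀ + ∫ s in (0:ℝ)..t, Phi m lam F (fun u => f (projIcc 0 τ hτle u)) s := by
    intro f
    apply continuous_const.add
    exact intervalIntegral.continuous_primitive
      (fun a b => (continuous_Phi hm hlam hF (hfbarc f)).intervalIntegrable a b) 0
  set T : C(Icc (0:ℝ) τ, Fin n → ℂ) → C(Icc (0:ℝ) τ, Fin n → ℂ) :=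
    Tmap m lam F ζ₀ hτle hcont with hT
  have hTapp : ∀ (f : C(Icc (0:ℝ) τ, Fin n → ℂ)) (t : Icc (0:ℝ) τ),
      T f t = ζ₀ + ∫ s in (0:ℝ)..(t:ℝ), Phi m lam F (fbar f) s := fun f t => rfl
  -- contraction
  have hK : ContractingWith (1/2 : NNReal) T := by
    constructor
    · rw [← NNReal.coe_lt_coe]
      norm_num
    · apply LipschitzWith.of_dist_le_mul
      intro f g
      have hd0 : (0:ℝ) ≤ dist f g := dist_nonneg
      have hhalf : ((1/2 : NNReal) : ℝ) = 1/2 := by norm_num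
      rw [hhalf, ContinuousMap.dist_le (by positivity)]
      intro t
      rw [dist_eq_norm, hTapp, hTapp, add_sub_add_left_eq_sub,
        ← intervalIntegral.integral_sub
          ((continuous_Phi hm hlam hF (hfbarc f)).intervalIntegrable 0 t)
          ((continuous_Phi hm hlam hF (hfbarc g)).intervalIntegrable 0 t)]
      have hbd : ∀ u, ‖fbar f u - fbar g u‖ ≤ dist f g := fun u => by
        rw [← dist_eq_norm]
        exact ContinuousMap.dist_apply_le_dist _
      have hIb : ∀ s ∈ Set.uIoc (0:ℝ) (t:ℝ),
          ‖Phi m lam F (fbar f) s - Phi m lam F (fbar g) s‖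
            ≤ (m + m * m * τ + 4 * π * (L:ℝ)) * dist f g := by
        intro s hs
        rw [uIoc_of_le t.2.1] at hs
        exact norm_Phi_sub_le hm hF (hfbarc f) (hfbarc g) hd0 hbd hs.1.le (hs.2.trans t.2.2)
      calc ‖∫ s in (0:ℝ)..(t:ℝ), (Phi m lam F (fbar f) s - Phi m lam F (fbar g) s)‖
          ≤ ((m + m * m * τ + 4 * π * (L:ℝ)) * dist f g) * |(t:ℝ) - 0| :=
            intervalIntegral.norm_integral_le_of_norm_le_const hIb
        _ ≤ ((m + m * m * τ + 4 * π * (L:ℝ)) * dist f g) * τ := by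
            apply mul_le_mul_of_nonneg_left _ (by positivity)
            rw [sub_zero, abs_of_nonneg t.2.1]
            exact t.2.2
        _ = (τ * (m + m * m * τ + 4 * π * (L:ℝ))) * dist f g := by ring
        _ ≤ (1/2) * dist f g := mul_le_mul_of_nonneg_right hτhalf hd0
  -- reduction of the delay equation on [0, τ]
  have hπC : (4 * (π:ℂ)) ≠ 0 := by
    simp [Complex.ofReal_ne_zero, Real.pi_ne_zero]
  have hred : ∀ (g : ℝ → Fin n → ℂ), ∀ t ∈ Icc (0:ℝ) τ, ∀ j : Fin n,
      ((m / (4 * π)) * g t j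
        + (∑ k : Fin n, if k ≠ j then
            (if dist (y j) (y k) ≤ t then
              g (t - dist (y j) (y k)) k / (4 * π * dist (y j) (y k)) else 0)
          else 0)
        + lam j t
        - (∑ k : Fin n, (m / (4 * π)) *
            ∫ s in (0:ℝ)..(max (t - dist (y j) (y k)) 0),
              (besselKernel m (dist (y j) (y k)) (t - s) : ℂ) * g s k)
        - F (g t) j :  ℂ)
      = (1 / (4 * π)) * Phi m lam F g t j := by
    intro g t ht j
    have hnot : ∀ k : Fin n, k ≠ j → ¬ (dist (y j) (y k) ≤ t) := by
      intro k hk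
      push_neg
      calc t ≤ τ := ht.2
        _ < δ := hτδ
        _ ≤ dist (y j) (y k) := hδ j k (Ne.symm hk)
    have hsum1 : (∑ k : Fin n, if k ≠ j then
        (if dist (y j) (y k) ≤ t then
          g (t - dist (y j) (y k)) k / (4 * (π:ℂ) * dist (y j) (y k)) else 0)
        else 0) = 0 := by
      apply Finset.sum_eq_zero
      intro k _
      by_cases hkj : k ≠ j
      · rw [if_pos hkj, if_neg (hnot k hkj)]
      · rw [if_neg hkj]
    have hsum2 : (∑ k : Fin n, ((m:ℂ) / (4 * π)) *
        ∫ s in (0:ℝ)..(max (t - dist (y j) (y k)) 0),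
          ((besselKernel m (dist (y j) (y k)) (t - s) : ℝ) : ℂ) * g s k)
        = ((m:ℂ) / (4 * π)) * convK m (fun u => g u j) t := by
      rw [Finset.sum_eq_single j]
      · rw [dist_self, sub_zero, max_eq_left ht.1]
        congr 1
        exact convK_eq m (fun u => g u j) t
      · intro k _ hkj
        have h1 : t - dist (y j) (y k) ≤ 0 := by
          have := hnot k hkj
          push_neg at this
          linarith
        rw [max_eq_right h1, intervalIntegral.integral_same, mul_zero]
      · intro h
        exact absurd (Finset.mem_univ j) h
    rw [hsum1, hsum2]
    have hϕ : Phi m lam F g t j = (m:ℂ) * g t j + 4 * (π:ℂ) * lam j t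
        - (m:ℂ) * convK m (fun u => g u j) t - 4 * (π:ℂ) * F (g t) j := by
      unfold Phi
      rw [max_eq_left ht.1]
    rw [hϕ]
    field_simp
    ring
  refine ⟨τ, hτ0, ?_, ?_⟩
  · -- existence
    haveI : Nonempty (C(Icc (0:ℝ) τ, Fin n → ℂ)) := ⟨ContinuousMap.const _ 0⟩
    set fstar : C(Icc (0:ℝ) τ, Fin n → ℂ) := ContractingWith.fixedPoint T hK with hfstar
    have hfixmap : T fstar = fstar := ContractingWith.fixedPoint_isFixedPt hK
    have hζc : Continuous (fbar fstar) := hfbarc fstar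
    have hPc : Continuous (Phi m lam F (fbar fstar)) := continuous_Phi hm hlam hF hζc
    have hζeq : ∀ t, t ∈ Icc (0:ℝ) τ →
        fbar fstar t = ζ₀ + ∫ s in (0:ℝ)..t, Phi m lam F (fbar fstar) s := by
      intro t ht
      rw [hfbar_eq fstar t ht]
      conv_lhs => rw [← hfixmap]
      exact hTapp fstar ⟨t, ht⟩
    refine ⟨fbar fstar, Phi m lam F (fbar fstar), ?_, ?_, ?_, ?_⟩
    · intro t ht
      have hprim : HasDerivWithinAt (fun u : ℝ => ζ₀ + ∫ s in (0:ℝ)..u, Phi m lam F (fbar fstar) s)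
          (Phi m lam F (fbar fstar) t) (Icc 0 τ) t := by
        apply HasDerivAt.hasDerivWithinAt
        exact (intervalIntegral.integral_hasDerivAt_right
          (hPc.intervalIntegrable 0 t)
          (hPc.stronglyMeasurableAtFilter MeasureTheory.volume (nhds t))
          hPc.continuousAt).const_add ζ₀
      exact hprim.congr (fun u hu => hζeq u hu) (hζeq t ht)
    · exact hPc.continuousOn
    · rw [hζeq 0 ⟨le_rfl, hτle⟩, intervalIntegral.integral_same, add_zero]
    · intro t ht j
      rw [hred (fbar fstar) t ht j]
  · -- uniqueness
    intro ζ ζ' η η' hζS hηS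
    have key : ∀ (ξ ξ' : ℝ → Fin n → ℂ), IsDelaySolution m y lam F ζ₀ τ ξ ξ' →
        ∃ f : C(Icc (0:ℝ) τ, Fin n → ℂ),
          Function.IsFixedPt T f ∧ ∀ t : Icc (0:ℝ) τ, f t = ξ (t:ℝ) := by
      rintro ξ ξ' ⟨hd, hc, h0, he⟩
      have hξcont : ContinuousOn ξ (Icc 0 τ) := fun t ht => (hd t ht).continuousWithinAt
      refine ⟨⟨fun t : Icc (0:ℝ) τ => ξ (t:ℝ), hξcont.restrict⟩, ?_, fun t => rfl⟩
      set f : C(Icc (0:ℝ) τ, Fin n → ℂ) :=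
        ⟨fun t : Icc (0:ℝ) τ => ξ (t:ℝ), hξcont.restrict⟩ with hfdef
      have hfb : EqOn (fbar f) ξ (Icc 0 τ) := by
        intro u hu
        rw [hfbar_eq f u hu]
        rfl
      have hξ'eq : ∀ s, s ∈ Icc (0:ℝ) τ → ξ' s = Phi m lam F ξ s := by
        intro s hs
        funext j
        have h1 := he s hs j
        rw [hred ξ s hs j] at h1
        exact mul_left_cancel₀ (one_div_ne_zero hπC) h1
      show T f = f
      refine ContinuousMap.ext fun t => ?_
      rw [hTapp]
      have hsub : Icc (0:ℝ) (t:ℝ) ⊆ Icc 0 τ := Icc_subset_Icc le_rfl t.2.2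
      have hint : (∫ s in (0:ℝ)..(t:ℝ), Phi m lam F (fbar f) s)
          = ∫ s in (0:ℝ)..(t:ℝ), ξ' s := by
        apply intervalIntegral.integral_congr
        intro s hs
        rw [uIcc_of_le t.2.1] at hs
        have hs' : s ∈ Icc (0:ℝ) τ := hsub hs
        rw [Phi_congr hfb hs', ← hξ'eq s hs']
      have hftc : (∫ s in (0:ℝ)..(t:ℝ), ξ' s) = ξ (t:ℝ) - ξ 0 := by
        apply intervalIntegral.integral_eq_sub_of_hasDeriv_right_of_le t.2.1
        · exact hξcont.mono hsub
        · intro x hx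
          have hmem : Icc (0:ℝ) τ ∈ 𝓝 x :=
            Icc_mem_nhds hx.1 (lt_of_lt_of_le hx.2 t.2.2)
          exact ((hd x ⟨hx.1.le, hx.2.le.trans t.2.2⟩).hasDerivAt hmem).hasDerivWithinAt
        · have hcc : ContinuousOn ξ' (uIcc (0:ℝ) (t:ℝ)) := by
            rw [uIcc_of_le t.2.1]
            exact hc.mono hsub
          exact hcc.intervalIntegrable
      rw [hint, hftc, h0]
      show ζ₀ + (ξ (t:ℝ) - ζ₀) = ξ (t:ℝ)
      ring
    obtain ⟨f, hfFix, hfval⟩ := key ζ ζ' hζS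
    obtain ⟨g, hgFix, hgval⟩ := key η η' hηS
    have hfg : f = g := hK.fixedPoint_unique' hfFix hgFix
    intro t ht
    calc ζ t = f ⟨t, ht⟩ := (hfval ⟨t, ht⟩).symm
      _ = g ⟨t, ht⟩ := by rw [hfg]
      _ = η t := hgval ⟨t, ht⟩
end

section
/- Let m > 0. There exists a constant C = C(m) > 0 such that for every t > 0 and every h ∈ L²([0,t]; ℂ): | ∫₀^t ∫₀^t \overline{h(s)} h(s') ( ∫₀^∞ ( sin((t−s)√(r²+m²)) sin((t−s')√(r²+m²)) / (r²+m²) ) dr ) ds ds' | ≤ C t ∫₀^t |h(s)|² ds. -/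
open Real Set Filter MeasureTheory intervalIntegral

/-- Let `m > 0`.  There is `C = C(m) > 0` such that for every `t > 0`
and every `h ∈ L²([0,t];ℂ)`,
`|∫₀^t∫₀^t h̄(s)h(s') (∫₀^∞ sin((t−s)√(r²+m²)) sin((t−s')√(r²+m²))/(r²+m²) dr) ds ds'|
  ≤ C t ∫₀^t |h(s)|² ds`. -/
theorem sine_correction_term_bound
    (m : ℝ) (hm : 0 < m) :
    ∃ C > 0, ∀ t : ℝ, 0 < t → ∀ h : ℝ → ℂ,
      MemLp h 2 ((volume : Measure ℝ).restrict (Icc 0 t)) →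
      ‖∫ s in (0:ℝ)..t, ∫ s' in (0:ℝ)..t,
          (starRingEnd ℂ) (h s) * h s' *
            Complex.ofReal (∫ r in Ioi (0:ℝ),
              Real.sin ((t - s) * Real.sqrt (r ^ 2 + m ^ 2)) *
                Real.sin ((t - s') * Real.sqrt (r ^ 2 + m ^ 2)) / (r ^ 2 + m ^ 2))‖
        ≤ C * t * ∫ s in (0:ℝ)..t, ‖h s‖ ^ 2 := by
  -- Integrability of the majorant `r ↦ (r² + m²)⁻¹`.
  have hg_int : IntegrableOn (fun r : ℝ => (r ^ 2 + m ^ 2)⁻¹) (Ioi 0) volume := by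
    have h1 : Integrable (fun r : ℝ => (m ^ 2)⁻¹ * (1 + (r / m) ^ 2)⁻¹) :=
      (integrable_inv_one_add_sq.comp_div hm.ne').const_mul _
    have heq : (fun r : ℝ => (r ^ 2 + m ^ 2)⁻¹)
        = fun r : ℝ => (m ^ 2)⁻¹ * (1 + (r / m) ^ 2)⁻¹ := by
      funext r
      rw [← mul_inv]
      congr 1
      field_simp
      ring
    rw [heq]
    exact h1.integrableOn
  set K : ℝ := ∫ r in Ioi (0:ℝ), (r ^ 2 + m ^ 2)⁻¹ with hKdef
  have hK0 : 0 ≤ K := integral_nonneg fun r => by positivity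
  -- The inner `r`-integral is bounded by `K` uniformly.
  have hI : ∀ a b : ℝ,
      |∫ r in Ioi (0:ℝ), Real.sin (a * Real.sqrt (r ^ 2 + m ^ 2)) *
        Real.sin (b * Real.sqrt (r ^ 2 + m ^ 2)) / (r ^ 2 + m ^ 2)| ≤ K := by
    intro a b
    rw [← Real.norm_eq_abs]
    refine norm_integral_le_of_norm_le hg_int (Eventually.of_forall fun r => ?_)
    have hd : (0:ℝ) < r ^ 2 + m ^ 2 := by positivity
    have h1 : |Real.sin (a * Real.sqrt (r ^ 2 + m ^ 2)) *
        Real.sin (b * Real.sqrt (r ^ 2 + m ^ 2))| ≤ 1 := by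
      rw [abs_mul]
      exact mul_le_one₀ (abs_le.mpr ⟨Real.neg_one_le_sin _, Real.sin_le_one _⟩)
        (abs_nonneg _) (abs_le.mpr ⟨Real.neg_one_le_sin _, Real.sin_le_one _⟩)
    rw [Real.norm_eq_abs, abs_div, abs_of_pos hd, div_le_iff₀ hd, inv_mul_cancel₀ hd.ne']
    exact h1
  refine ⟨K + 1, by linarith, fun t ht h hh => ?_⟩
  haveI : Fact ((volume : Measure ℝ) (Icc (0:ℝ) t) < ⊤) := ⟨measure_Icc_lt_top⟩
  -- `‖h‖` is interval integrable on `[0, t]`.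
  have hh1 : IntegrableOn (fun s => ‖h s‖) (Icc 0 t) volume :=
    (hh.norm.integrable one_le_two)
  have hInt1 : IntervalIntegrable (fun s => ‖h s‖) volume 0 t := by
    apply IntegrableOn.intervalIntegrable
    rwa [uIcc_of_le ht.le]
  set A : ℝ := ∫ s in (0:ℝ)..t, ‖h s‖ with hAdef
  have hA0 : 0 ≤ A :=
    intervalIntegral.integral_nonneg ht.le (fun s _ => norm_nonneg _)
  set B : ℝ := ∫ s in (0:ℝ)..t, ‖h s‖ ^ 2 with hBdef
  have hB0 : 0 ≤ B :=
    intervalIntegral.integral_nonneg ht.le (fun s _ => by positivity)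
  -- Pointwise bound on the full integrand.
  have hpt : ∀ s s' : ℝ,
      ‖(starRingEnd ℂ) (h s) * h s' *
          Complex.ofReal (∫ r in Ioi (0:ℝ),
            Real.sin ((t - s) * Real.sqrt (r ^ 2 + m ^ 2)) *
              Real.sin ((t - s') * Real.sqrt (r ^ 2 + m ^ 2)) / (r ^ 2 + m ^ 2))‖
        ≤ ‖h s‖ * K * ‖h s'‖ := by
    intro s s'
    rw [norm_mul, norm_mul, RCLike.norm_conj, Complex.norm_real, Real.norm_eq_abs]
    have h1 := hI (t - s) (t - s')
    have h2 : (0:ℝ) ≤ |∫ r in Ioi (0:ℝ), Real.sin ((t - s) * Real.sqrt (r ^ 2 + m ^ 2)) *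
        Real.sin ((t - s') * Real.sqrt (r ^ 2 + m ^ 2)) / (r ^ 2 + m ^ 2)| := abs_nonneg _
    nlinarith [norm_nonneg (h s), norm_nonneg (h s'),
      mul_nonneg (norm_nonneg (h s)) (norm_nonneg (h s'))]
  -- Bound on the inner integral over `s'`.
  have hinner : ∀ s : ℝ,
      ‖∫ s' in (0:ℝ)..t, (starRingEnd ℂ) (h s) * h s' *
          Complex.ofReal (∫ r in Ioi (0:ℝ),
            Real.sin ((t - s) * Real.sqrt (r ^ 2 + m ^ 2)) *
              Real.sin ((t - s') * Real.sqrt (r ^ 2 + m ^ 2)) / (r ^ 2 + m ^ 2))‖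
        ≤ ‖h s‖ * (K * A) := by
    intro s
    have hb : IntervalIntegrable (fun s' => ‖h s‖ * K * ‖h s'‖) volume 0 t :=
      hInt1.const_mul _
    have := intervalIntegral.norm_integral_le_abs_of_norm_le
      (Eventually.of_forall fun s' => hpt s s') hb
    calc _ ≤ |∫ s' in (0:ℝ)..t, ‖h s‖ * K * ‖h s'‖| := this
      _ = |‖h s‖ * K * A| := by rw [intervalIntegral.integral_const_mul]
      _ = ‖h s‖ * (K * A) := by
          rw [abs_of_nonneg (by positivity)]; ring
  -- Bound on the outer integral.
  have houter :
      ‖∫ s in (0:ℝ)..t, ∫ s' in (0:ℝ)..t, (starRingEnd ℂ) (h s) * h s' *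
          Complex.ofReal (∫ r in Ioi (0:ℝ),
            Real.sin ((t - s) * Real.sqrt (r ^ 2 + m ^ 2)) *
              Real.sin ((t - s') * Real.sqrt (r ^ 2 + m ^ 2)) / (r ^ 2 + m ^ 2))‖
        ≤ K * A ^ 2 := by
    have hb : IntervalIntegrable (fun s => ‖h s‖ * (K * A)) volume 0 t :=
      hInt1.mul_const _
    have := intervalIntegral.norm_integral_le_abs_of_norm_le
      (Eventually.of_forall fun s => hinner s) hb
    calc _ ≤ |∫ s in (0:ℝ)..t, ‖h s‖ * (K * A)| := this
      _ = |A * (K * A)| := by rw [intervalIntegral.integral_mul_const]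
      _ = K * A ^ 2 := by rw [abs_of_nonneg (by positivity)]; ring
  -- Cauchy–Schwarz: `A² ≤ t * B`.
  have hCS : A ^ 2 ≤ t * B := by
    have hpq : Real.HolderConjugate 2 2 := Real.HolderConjugate.two_two
    have h2 : ENNReal.ofReal (2:ℝ) = 2 := by
      rw [ENNReal.ofReal_ofNat]
    have hone : MemLp (fun _ : ℝ => (1:ℂ)) (ENNReal.ofReal 2)
        ((volume : Measure ℝ).restrict (Icc 0 t)) := by
      rw [h2]; exact memLp_const 1
    have hhl : MemLp h (ENNReal.ofReal 2)
        ((volume : Measure ℝ).restrict (Icc 0 t)) := by rw [h2]; exact hh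
    have := MeasureTheory.integral_mul_norm_le_Lp_mul_Lq hpq hhl hone
    simp only [norm_one, mul_one, Real.one_rpow] at this
    have hl : ∫ a in Icc (0:ℝ) t, ‖h a‖ = A := by
      rw [MeasureTheory.integral_Icc_eq_integral_Ioc, hAdef,
        intervalIntegral.integral_of_le ht.le]
    have hc : ∫ a in Icc (0:ℝ) t, (1:ℝ) = t := by
      simp [Real.volume_Icc, ENNReal.toReal_ofReal ht.le, ht.le]
    have hr : ∫ a in Icc (0:ℝ) t, ‖h a‖ ^ (2:ℝ) = B := by
      have : ∀ a : ℝ, ‖h a‖ ^ (2:ℝ) = ‖h a‖ ^ 2 := fun a => by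
        rw [show (2:ℝ) = ((2:ℕ):ℝ) by norm_num, Real.rpow_natCast]
      simp_rw [this]
      rw [MeasureTheory.integral_Icc_eq_integral_Ioc, hBdef,
        intervalIntegral.integral_of_le ht.le]
    rw [hl, hr] at this
    have hc' : (∫ a in Icc (0:ℝ) t, (1:ℝ)) ^ ((1:ℝ)/2) = Real.sqrt t := by
      rw [hc, Real.sqrt_eq_rpow]
    rw [hc'] at this
    have hB12 : B ^ ((1:ℝ)/2) = Real.sqrt B := by rw [Real.sqrt_eq_rpow]
    rw [hB12] at this
    nlinarith [Real.sq_sqrt ht.le, Real.sq_sqrt hB0, Real.sqrt_nonneg t,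
      Real.sqrt_nonneg B, hA0]
  calc _ ≤ K * A ^ 2 := houter
    _ ≤ K * (t * B) := by gcongr
    _ ≤ (K + 1) * t * B := by nlinarith [mul_nonneg ht.le hB0]
end
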